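/- With the notation of the context, assume in addition that x_k and x_l lie in the same filtration levels, i.e. for every p one has x_k ∈ F^p if and only if x_l ∈ F^p. Then the chain maps f = π ∘ (id_C − d∘h) and g = (id_C − h∘d) ∘ ι and the homotopy h are all filtered: for every p ≥ 0, c ∈ F^p implies ι(f(c)) ∈ F^p, ι(a) ∈ F^p implies g(a) ∈ F^p, and c ∈ F^p implies h(c) ∈ F^p. In particular (C, d) and (C', d') are filtered chain homotopy equivalent. -/

import Mathlib

open Finsupp

/-- The complement of the two cancelled basis indices. -/
def cancelSet {I : Type*} (k l : I) : Set I := {i | i ≠ k ∧ i ≠ l}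

variable {R : Type*} [CommRing R] {C : Type*} [AddCommGroup C] [Module R C]
  {I : Type*}

/-- The inclusion `ι : C' → C` of the free module on the remaining basis vectors. -/
noncomputable def cancelIota (b : Module.Basis I R C) (k l : I) :
    ((cancelSet k l) →₀ R) →ₗ[R] C :=
  Finsupp.linearCombination R (fun i : cancelSet k l => b i.1)

/-- The projection `π : C → C'` killing `x_k` and `x_l` and fixing the other
basis vectors. -/
noncomputable def cancelPi (b : Module.Basis I R C) (k l : I) :
    C →ₗ[R] ((cancelSet k l) →₀ R) :=
  (Finsupp.lsubtypeDomain (cancelSet k l)) ∘ₗ (b.repr : C →ₗ[R] (I →₀ R))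

/-- The map `h : C → C` with `h(x_l) = x_k` and `h(x_i) = 0` for `i ≠ l`. -/
noncomputable def cancelH (b : Module.Basis I R C) (k l : I) : C →ₗ[R] C :=
  (LinearMap.toSpanSingleton R C (b k)) ∘ₗ (b.coord l)

/-- The reduced differential `d' = π ∘ (d - d∘h∘d) ∘ ι`. -/
noncomputable def cancelD (b : Module.Basis I R C) (k l : I) (d : C →ₗ[R] C) :
    ((cancelSet k l) →₀ R) →ₗ[R] ((cancelSet k l) →₀ R) :=
  (cancelPi b k l) ∘ₗ (d - d ∘ₗ (cancelH b k l) ∘ₗ d) ∘ₗ (cancelIota b k l)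

/-- The chain map `f = π ∘ (id - d∘h) : C → C'`. -/
noncomputable def cancelF (b : Module.Basis I R C) (k l : I) (d : C →ₗ[R] C) :
    C →ₗ[R] ((cancelSet k l) →₀ R) :=
  (cancelPi b k l) ∘ₗ (LinearMap.id - d ∘ₗ (cancelH b k l))

/-- The chain map `g = (id - h∘d) ∘ ι : C' → C`. -/
noncomputable def cancelG (b : Module.Basis I R C) (k l : I) (d : C →ₗ[R] C) :
    ((cancelSet k l) →₀ R) →ₗ[R] C :=
  (LinearMap.id - (cancelH b k l) ∘ₗ d) ∘ₗ (cancelIota b k l)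

section CancellationAux

variable (b : Module.Basis I R C) (k l : I)

lemma cancelIota_single (i : cancelSet k l) (r : R) :
    cancelIota b k l (Finsupp.single i r) = r • b i.1 := by
  simp [cancelIota]

lemma cancelH_apply (c : C) : cancelH b k l c = b.repr c l • b k := by
  simp [cancelH, LinearMap.toSpanSingleton_apply]

lemma cancelPi_apply (c : C) (j : cancelSet k l) :
    cancelPi b k l c j = b.repr c j.1 := by
  simp [cancelPi, Finsupp.lsubtypeDomain, Finsupp.subtypeDomain]

lemma repr_iota_not_mem (a : cancelSet k l →₀ R) (i : I) (hi : i ∉ cancelSet k l) :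
    b.repr (cancelIota b k l a) i = 0 := by
  classical
  induction a using Finsupp.induction_linear with
  | zero => simp
  | add f g hf hg => rw [map_add, map_add, Finsupp.add_apply, hf, hg, add_zero]
  | single j r =>
      rw [cancelIota_single, map_smul, Finsupp.smul_apply, b.repr_self,
        Finsupp.single_apply]
      have : ¬ j.1 = i := fun e => hi (e ▸ j.2)
      simp [this]

lemma repr_iota_mem (a : cancelSet k l →₀ R) (j : cancelSet k l) :
    b.repr (cancelIota b k l a) j.1 = a j := by
  classical
  induction a using Finsupp.induction_linear with
  | zero => simp
  | add f g hf hg => rw [map_add, map_add, Finsupp.add_apply, hf, hg, Finsupp.add_apply]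
  | single j' r =>
      rw [cancelIota_single, map_smul, Finsupp.smul_apply, b.repr_self,
        Finsupp.single_apply, Finsupp.single_apply]
      by_cases hjj : j' = j
      · simp [hjj]
      · have : ¬ j'.1 = j.1 := fun e => hjj (Subtype.ext e)
        simp [this, hjj]

lemma pi_iota (a : cancelSet k l →₀ R) : cancelPi b k l (cancelIota b k l a) = a := by
  ext j
  rw [cancelPi_apply, repr_iota_mem]

lemma pi_bk : cancelPi b k l (b k) = 0 := by
  classical
  ext j
  rw [cancelPi_apply, b.repr_self, Finsupp.single_apply]
  simp [Ne.symm j.2.1]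

lemma pi_bl : cancelPi b k l (b l) = 0 := by
  classical
  ext j
  rw [cancelPi_apply, b.repr_self, Finsupp.single_apply]
  simp [Ne.symm j.2.2]

lemma iota_pi (hkl : k ≠ l) (c : C) :
    cancelIota b k l (cancelPi b k l c) = c - b.repr c k • b k - b.repr c l • b l := by
  classical
  have key : (cancelIota b k l) ∘ₗ (cancelPi b k l) =
      LinearMap.id - (LinearMap.toSpanSingleton R C (b k)) ∘ₗ b.coord k
        - (LinearMap.toSpanSingleton R C (b l)) ∘ₗ b.coord l := by
    apply b.ext
    intro i
    simp only [LinearMap.comp_apply, LinearMap.sub_apply, LinearMap.id_apply,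
      LinearMap.toSpanSingleton_apply, Module.Basis.coord_apply, b.repr_self]
    by_cases hik : i = k
    · subst hik
      rw [pi_bk, map_zero, Finsupp.single_apply, Finsupp.single_apply]
      simp [hkl]
    · by_cases hil : i = l
      · subst hil
        rw [pi_bl, map_zero, Finsupp.single_apply, Finsupp.single_apply]
        simp [hik]
      · have hmem : i ∈ cancelSet k l := ⟨hik, hil⟩
        have : cancelPi b k l (b i) = Finsupp.single ⟨i, hmem⟩ 1 := by
          ext j
          rw [cancelPi_apply, b.repr_self, Finsupp.single_apply, Finsupp.single_apply]
          by_cases hij : (⟨i, hmem⟩ : cancelSet k l) = j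
          · subst hij; simp
          · have : ¬ i = j.1 := fun e => hij (Subtype.ext e)
            simp [this, hij]
        rw [this, cancelIota_single, Finsupp.single_apply, Finsupp.single_apply]
        simp [hik, hil]
  have := congrArg (fun φ => φ c) key
  simpa using this

end CancellationAux

/-- cancellation lemma, filtered homotopy equivalence:
if moreover `x_k` and `x_l` lie in the same filtration levels, then the chain
maps `f`, `g` and the homotopy `h` are all filtered; in particular (together
with `f ∘ g = id` and `id - g ∘ f = d∘h + h∘d`) the complexes `(C, d)` and
`(C', d')` are filtered chain homotopy equivalent. -/
theorem cancellation_filtered_homotopy_equivalence (b : Module.Basis I R C) (d : C →ₗ[R] C)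
    (hd : d ∘ₗ d = 0) (k l : I) (hkl : k ≠ l) (hdkl : b.repr (d (b k)) l = 1)
    (F : ℕ → Submodule R C) (hF0 : F 0 = ⊤) (hFmono : Antitone F)
    (hFd : ∀ p, ∀ c ∈ F p, d c ∈ F p)
    (hFadapted : ∀ p, F p = Submodule.span R (b '' {i : I | b i ∈ F p}))
    (hFkl : ∀ p, b l ∈ F p → d (b k) ∈ F p)
    (hsame : ∀ p, b k ∈ F p ↔ b l ∈ F p) :
    (∀ (p : ℕ) (c : C), c ∈ F p → cancelIota b k l (cancelF b k l d c) ∈ F p) ∧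
    (∀ (p : ℕ) (a : (cancelSet k l) →₀ R),
      cancelIota b k l a ∈ F p → cancelG b k l d a ∈ F p) ∧
    (∀ (p : ℕ) (c : C), c ∈ F p → cancelH b k l c ∈ F p) ∧
    (cancelF b k l d) ∘ₗ (cancelG b k l d) = LinearMap.id ∧
    LinearMap.id - (cancelG b k l d) ∘ₗ (cancelF b k l d) =
      d ∘ₗ (cancelH b k l) + (cancelH b k l) ∘ₗ d := by
  classical
  have hdd : ∀ x, d (d x) = 0 := fun x => by
    have := LinearMap.ext_iff.mp hd x; simpa using this
  have hcoeff : ∀ p (c : C), c ∈ F p → ∀ i, b.repr c i ≠ 0 → b i ∈ F p := by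
    intro p c hc i hi
    rw [hFadapted p] at hc
    exact b.mem_span_image.mp hc (Finsupp.mem_support_iff.mpr hi)
  have hterm : ∀ p (c : C), c ∈ F p → ∀ i, b.repr c i • b i ∈ F p := by
    intro p c hc i
    by_cases h0 : b.repr c i = 0
    · simp [h0]
    · exact Submodule.smul_mem _ _ (hcoeff p c hc i h0)
  -- h is filtered
  have hH : ∀ (p : ℕ) (c : C), c ∈ F p → cancelH b k l c ∈ F p := by
    intro p c hc
    rw [cancelH_apply]
    by_cases h0 : b.repr c l = 0
    · simp [h0]
    · exact Submodule.smul_mem _ _ ((hsame p).mpr (hcoeff p c hc l h0))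
  -- f applied
  have hFapp : ∀ c : C, cancelF b k l d c = cancelPi b k l (c - d (cancelH b k l c)) := by
    intro c; simp [cancelF]
  have hGapp : ∀ a, cancelG b k l d a =
      cancelIota b k l a - cancelH b k l (d (cancelIota b k l a)) := by
    intro a; simp [cancelG]
  refine ⟨?_, ?_, hH, ?_, ?_⟩
  · -- f filtered
    intro p c hc
    have hu : c - d (cancelH b k l c) ∈ F p := sub_mem hc (hFd p _ (hH p c hc))
    rw [hFapp, iota_pi b k l hkl]
    exact sub_mem (sub_mem hu (hterm p _ hu k)) (hterm p _ hu l)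
  · -- g filtered
    intro p a ha
    rw [hGapp]
    exact sub_mem ha (hH p _ (hFd p _ ha))
  · -- f ∘ g = id
    refine LinearMap.ext fun a => ?_
    have hlnot : l ∉ cancelSet k l := fun h => h.2 rfl
    have hknot : k ∉ cancelSet k l := fun h => h.1 rfl
    have hga : cancelG b k l d a =
        cancelIota b k l a - b.repr (d (cancelIota b k l a)) l • b k := by
      rw [hGapp, cancelH_apply]
    have hrepr_l : b.repr (cancelG b k l d a) l = 0 := by
      rw [hga, map_sub, map_smul, Finsupp.sub_apply, Finsupp.smul_apply,
        repr_iota_not_mem b k l a l hlnot, b.repr_self, Finsupp.single_apply,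
        if_neg hkl]
      simp
    rw [LinearMap.comp_apply, LinearMap.id_apply, hFapp, cancelH_apply, hrepr_l,
      zero_smul, map_zero, sub_zero, hga, map_sub, map_smul, pi_iota, pi_bk,
      smul_zero, sub_zero]
  · -- homotopy identity
    refine LinearMap.ext fun c => ?_
    set u : C := c - b.repr c l • d (b k) with hu
    have hfc : cancelF b k l d c = cancelPi b k l u := by
      rw [hFapp, cancelH_apply, map_smul]
    have hrepru_l : b.repr u l = 0 := by
      rw [hu, map_sub, map_smul, Finsupp.sub_apply, Finsupp.smul_apply, hdkl]
      simp
    set α : R := b.repr u k with hα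
    have hiotafc : cancelIota b k l (cancelF b k l d c) = u - α • b k := by
      rw [hfc, iota_pi b k l hkl, hrepru_l, zero_smul, sub_zero]
    have hdu : d u = d c := by
      rw [hu, map_sub, map_smul, hdd, smul_zero, sub_zero]
    have hdfc : d (cancelIota b k l (cancelF b k l d c)) = d c - α • d (b k) := by
      rw [hiotafc, map_sub, map_smul, hdu]
    have hreprd : b.repr (d (cancelIota b k l (cancelF b k l d c))) l
        = b.repr (d c) l - α := by
      rw [hdfc, map_sub, map_smul, Finsupp.sub_apply, Finsupp.smul_apply, hdkl,
        smul_eq_mul, mul_one]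
    have hgfc : cancelG b k l d (cancelF b k l d c)
        = u - b.repr (d c) l • b k := by
      rw [hGapp, cancelH_apply, hreprd, hiotafc, sub_smul]
      abel
    rw [LinearMap.sub_apply, LinearMap.comp_apply, LinearMap.id_apply, hgfc,
      LinearMap.add_apply, LinearMap.comp_apply, LinearMap.comp_apply,
      cancelH_apply, cancelH_apply, map_smul, hu]
    abel
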